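/- arXiv:1808.07130 — 2 statements merged into one kernel-verified Lean document; each statement's English description precedes it below -/
import Mathlib

section
/- Let c > 0, Z > 0, T > 0, A₀ > 0, and define A(z,t) = A₀ · exp(c·A₀·z·(1+Z)·(e^t − 1) + t) for 0 ≤ z ≤ Z, 0 ≤ t ≤ T. Then A satisfies the integral equation A(z,t) = A₀ + ∫₀^t [ c·(1+Z)·(A ⋆ A)(z,s) + A(z,s) ] ds, where (A ⋆ A)(z,s) = ∫₀^z A(z−y, s)·A(y, s) dy. -/
theorem A_integral_equation (c Z T A₀ : ℝ) (hc : 0 < c) (hZ : 0 < Z) (hT : 0 < T)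
    (hA₀ : 0 < A₀)
    (A : ℝ → ℝ → ℝ)
    (hA : ∀ z t : ℝ, A z t = A₀ * Real.exp (c * A₀ * z * (1 + Z) * (Real.exp t - 1) + t)) :
    ∀ z t : ℝ, 0 ≤ z → z ≤ Z → 0 ≤ t → t ≤ T →
      A z t = A₀ + ∫ s in (0:ℝ)..t,
        (c * (1 + Z) * ∫ y in (0:ℝ)..z, A (z - y) s * A y s) + A z s := by
  intro z t hz hzZ ht htT
  set K := c * A₀ * z * (1 + Z) with hK
  have hinner : ∀ s : ℝ, (∫ y in (0:ℝ)..z, A (z - y) s * A y s)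
      = z * (A₀ ^ 2 * Real.exp (K * (Real.exp s - 1) + 2 * s)) := by
    intro s
    have h1 : ∀ y : ℝ, A (z - y) s * A y s
        = A₀ ^ 2 * Real.exp (K * (Real.exp s - 1) + 2 * s) := by
      intro y
      rw [hA, hA, mul_mul_mul_comm, ← sq, ← Real.exp_add]
      congr 1
      rw [hK]; ring
    simp_rw [h1]
    rw [intervalIntegral.integral_const]
    simp [mul_comm]
  set f : ℝ → ℝ := fun s => A₀ * Real.exp (K * (Real.exp s - 1) + s) with hf
  set g : ℝ → ℝ := fun s =>
    c * (1 + Z) * (z * (A₀ ^ 2 * Real.exp (K * (Real.exp s - 1) + 2 * s))) + f s with hg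
  have hderiv : ∀ s : ℝ, HasDerivAt f (g s) s := by
    intro s
    have h1 : HasDerivAt (fun s : ℝ => K * (Real.exp s - 1) + s)
        (K * Real.exp s + 1) s := by
      exact (((Real.hasDerivAt_exp s).sub_const 1).const_mul K).add (hasDerivAt_id s)
    have h2 := (h1.exp).const_mul A₀
    refine h2.congr_deriv ?_
    have h3 : K * (Real.exp s - 1) + 2 * s = (K * (Real.exp s - 1) + s) + s := by ring
    rw [hg, hf]
    beta_reduce
    simp only [h3, two_mul, Real.exp_add, hK]
    ring
  have hgcont : Continuous g := by
    rw [hg, hf]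
    continuity
  have hFTC : ∫ s in (0:ℝ)..t, g s = f t - f 0 := by
    apply intervalIntegral.integral_eq_sub_of_hasDerivAt
    · intro x _; exact hderiv x
    · exact hgcont.intervalIntegrable 0 t
  have hf0 : f 0 = A₀ := by simp [hf]
  have hfz : ∀ s, A z s = f s := by intro s; rw [hA, hf, hK]
  calc A z t = f t := hfz t
    _ = A₀ + (f t - f 0) := by rw [hf0]; ring
    _ = A₀ + ∫ s in (0:ℝ)..t, g s := by rw [hFTC]
    _ = _ := by
        congr 1
        apply intervalIntegral.integral_congr
        intro s _
        beta_reduce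
        rw [hinner s, hfz s]
end

section
/- Comparison lemma: Let Z, T > 0, let f : [0,Z]×[0,T] → [0,∞) be continuous, let c' > 0 and A₀ > 0, and suppose f(z,t) ≤ A₀ + ∫₀^t [ c'·(f ⋆ f)(z,s) + A₀ ] ds for all (z,t) ∈ [0,Z]×[0,T], where (f ⋆ f)(z,s) = ∫₀^z f(z−y,s) f(y,s) dy. If A is the continuous function satisfying A(z,t) = A₀ + ∫₀^t [ c'·(A ⋆ A)(z,s) + A(z,s) ] ds with A ≥ A₀ everywhere, then f(z,t) ≤ A(z,t) for all (z,t) ∈ [0,Z]×[0,T]. -/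
open Set

theorem comparison_lemma (Z T c' A₀ : ℝ) (hZ : 0 < Z) (hT : 0 < T) (hc' : 0 < c')
    (hA₀ : 0 < A₀) (f A : ℝ → ℝ → ℝ)
    (hf_cont : ContinuousOn (fun p : ℝ × ℝ => f p.1 p.2) (Icc 0 Z ×ˢ Icc 0 T))
    (hf_nonneg : ∀ z ∈ Icc (0:ℝ) Z, ∀ t ∈ Icc (0:ℝ) T, 0 ≤ f z t)
    (hf_le : ∀ z ∈ Icc (0:ℝ) Z, ∀ t ∈ Icc (0:ℝ) T,
      f z t ≤ A₀ + ∫ s in (0:ℝ)..t,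
        (c' * ∫ y in (0:ℝ)..z, f (z - y) s * f y s) + A₀)
    (hA_cont : ContinuousOn (fun p : ℝ × ℝ => A p.1 p.2) (Icc 0 Z ×ˢ Icc 0 T))
    (hA_eq : ∀ z ∈ Icc (0:ℝ) Z, ∀ t ∈ Icc (0:ℝ) T,
      A z t = A₀ + ∫ s in (0:ℝ)..t,
        (c' * ∫ y in (0:ℝ)..z, A (z - y) s * A y s) + A z s)
    (hA_ge : ∀ z ∈ Icc (0:ℝ) Z, ∀ t ∈ Icc (0:ℝ) T, A₀ ≤ A z t) :
    ∀ z ∈ Icc (0:ℝ) Z, ∀ t ∈ Icc (0:ℝ) T, f z t ≤ A z t := by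
  -- clamping functions, used to extend `f` and `A` continuously to all of `ℝ²`
  set cz : ℝ → ℝ := fun x => max 0 (min x Z) with hcz
  set ct : ℝ → ℝ := fun x => max 0 (min x T) with hct
  have hczmem : ∀ x, cz x ∈ Icc (0:ℝ) Z := fun x =>
    ⟨le_max_left _ _, max_le hZ.le (min_le_right _ _)⟩
  have hctmem : ∀ x, ct x ∈ Icc (0:ℝ) T := fun x =>
    ⟨le_max_left _ _, max_le hT.le (min_le_right _ _)⟩
  have hczeq : ∀ x ∈ Icc (0:ℝ) Z, cz x = x := fun x hx => by
    simp only [hcz]; rw [min_eq_left hx.2, max_eq_right hx.1]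
  have hcteq : ∀ x ∈ Icc (0:ℝ) T, ct x = x := fun x hx => by
    simp only [hct]; rw [min_eq_left hx.2, max_eq_right hx.1]
  have hczc : Continuous cz := continuous_const.max (continuous_id.min continuous_const)
  have hctc : Continuous ct := continuous_const.max (continuous_id.min continuous_const)
  -- the extended functions
  set F : ℝ → ℝ → ℝ := fun z t => f (cz z) (ct t) with hFdef
  set G : ℝ → ℝ → ℝ := fun z t => A (cz z) (ct t) with hGdef
  have hFc : Continuous fun p : ℝ × ℝ => F p.1 p.2 :=
    hf_cont.comp_continuous ((hczc.comp continuous_fst).prodMk (hctc.comp continuous_snd))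
      (fun p => ⟨hczmem _, hctmem _⟩)
  have hGc : Continuous fun p : ℝ × ℝ => G p.1 p.2 :=
    hA_cont.comp_continuous ((hczc.comp continuous_fst).prodMk (hctc.comp continuous_snd))
      (fun p => ⟨hczmem _, hctmem _⟩)
  have hFeq : ∀ z ∈ Icc (0:ℝ) Z, ∀ t ∈ Icc (0:ℝ) T, F z t = f z t := fun z hz t ht => by
    simp only [hFdef]; rw [hczeq z hz, hcteq t ht]
  have hGeqA : ∀ z ∈ Icc (0:ℝ) Z, ∀ t ∈ Icc (0:ℝ) T, G z t = A z t := fun z hz t ht => by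
    simp only [hGdef]; rw [hczeq z hz, hcteq t ht]
  have hFnn : ∀ z t, 0 ≤ F z t := fun z t => hf_nonneg _ (hczmem z) _ (hctmem t)
  have hGge : ∀ z t, A₀ ≤ G z t := fun z t => hA_ge _ (hczmem z) _ (hctmem t)
  -- a uniform bound `K` on `F` and `G`
  obtain ⟨K, hFK, hGK, hKA₀⟩ :
      ∃ K : ℝ, (∀ z t, F z t ≤ K) ∧ (∀ z t, G z t ≤ K) ∧ A₀ ≤ K := by
    have hFcl : ∀ z t, F z t = F (cz z) (ct t) := fun z t => by
      simp only [hFdef]; rw [hczeq _ (hczmem z), hcteq _ (hctmem t)]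
    have hGcl : ∀ z t, G z t = G (cz z) (ct t) := fun z t => by
      simp only [hGdef]; rw [hczeq _ (hczmem z), hcteq _ (hctmem t)]
    have hcomp : IsCompact (Icc (0:ℝ) Z ×ˢ Icc (0:ℝ) T) := isCompact_Icc.prod isCompact_Icc
    have hne : (Icc (0:ℝ) Z ×ˢ Icc (0:ℝ) T).Nonempty :=
      ⟨(0, 0), ⟨⟨le_refl _, hZ.le⟩, ⟨le_refl _, hT.le⟩⟩⟩
    obtain ⟨q, hq, hmax⟩ := hcomp.exists_isMaxOn hne ((hFc.max hGc).continuousOn)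
    refine ⟨max (F q.1 q.2) (G q.1 q.2), ?_, ?_, ?_⟩
    · intro z t
      have h := hmax (show ((cz z, ct t) : ℝ × ℝ) ∈ Icc (0:ℝ) Z ×ˢ Icc (0:ℝ) T from
        ⟨hczmem z, hctmem t⟩)
      simp only at h
      calc F z t = F (cz z) (ct t) := hFcl z t
        _ ≤ max (F (cz z) (ct t)) (G (cz z) (ct t)) := le_max_left _ _
        _ ≤ _ := h
    · intro z t
      have h := hmax (show ((cz z, ct t) : ℝ × ℝ) ∈ Icc (0:ℝ) Z ×ˢ Icc (0:ℝ) T from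
        ⟨hczmem z, hctmem t⟩)
      simp only at h
      calc G z t = G (cz z) (ct t) := hGcl z t
        _ ≤ max (F (cz z) (ct t)) (G (cz z) (ct t)) := le_max_right _ _
        _ ≤ _ := h
    · exact (hGge q.1 q.2).trans (le_max_right _ _)
  have hK0 : 0 < K := hA₀.trans_le hKA₀
  -- the convolutions of the extended functions
  set cF : ℝ → ℝ → ℝ := fun z s => ∫ y in (0:ℝ)..z, F (z - y) s * F y s with hcFdef
  set cG : ℝ → ℝ → ℝ := fun z s => ∫ y in (0:ℝ)..z, G (z - y) s * G y s with hcGdef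
  have hcFeq : ∀ z s, cF z s = ∫ y in (0:ℝ)..z, F (z - y) s * F y s := fun z s => rfl
  have hcGeq : ∀ z s, cG z s = ∫ y in (0:ℝ)..z, G (z - y) s * G y s := fun z s => rfl
  have hcFc : ∀ z, Continuous fun s => cF z s := by
    intro z
    apply intervalIntegral.continuous_parametric_intervalIntegral_of_continuous'
    show Continuous fun p : ℝ × ℝ => F (z - p.2) p.1 * F p.2 p.1
    exact (hFc.comp (by fun_prop : Continuous fun p : ℝ × ℝ => ((z - p.2, p.1) : ℝ × ℝ))).mul
      (hFc.comp (by fun_prop : Continuous fun p : ℝ × ℝ => ((p.2, p.1) : ℝ × ℝ)))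
  have hcGc : ∀ z, Continuous fun s => cG z s := by
    intro z
    apply intervalIntegral.continuous_parametric_intervalIntegral_of_continuous'
    show Continuous fun p : ℝ × ℝ => G (z - p.2) p.1 * G p.2 p.1
    exact (hGc.comp (by fun_prop : Continuous fun p : ℝ × ℝ => ((z - p.2, p.1) : ℝ × ℝ))).mul
      (hGc.comp (by fun_prop : Continuous fun p : ℝ × ℝ => ((p.2, p.1) : ℝ × ℝ)))
  -- integrability of the inner integrands
  have hyintF : ∀ z s a b : ℝ, IntervalIntegrable (fun y => F (z - y) s * F y s)
      MeasureTheory.volume a b := by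
    intro z s a b
    apply Continuous.intervalIntegrable
    exact (hFc.comp (by fun_prop : Continuous fun y : ℝ => ((z - y, s) : ℝ × ℝ))).mul
      (hFc.comp (by fun_prop : Continuous fun y : ℝ => ((y, s) : ℝ × ℝ)))
  have hyintG : ∀ z s a b : ℝ, IntervalIntegrable (fun y => G (z - y) s * G y s)
      MeasureTheory.volume a b := by
    intro z s a b
    apply Continuous.intervalIntegrable
    exact (hGc.comp (by fun_prop : Continuous fun y : ℝ => ((z - y, s) : ℝ × ℝ))).mul
      (hGc.comp (by fun_prop : Continuous fun y : ℝ => ((y, s) : ℝ × ℝ)))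
  -- equality of inner integrals on the rectangle
  have inner : ∀ (h : ℝ → ℝ → ℝ) (h' : ℝ → ℝ → ℝ),
      (∀ z ∈ Icc (0:ℝ) Z, ∀ t ∈ Icc (0:ℝ) T, h z t = h' z t) →
      ∀ z ∈ Icc (0:ℝ) Z, ∀ s ∈ Icc (0:ℝ) T,
      (∫ y in (0:ℝ)..z, h (z - y) s * h y s) = ∫ y in (0:ℝ)..z, h' (z - y) s * h' y s := by
    intro h h' hhh' z hz s hs
    apply intervalIntegral.integral_congr
    intro y hy
    rw [uIcc_of_le hz.1] at hy
    have h1 : z - y ∈ Icc (0:ℝ) Z := ⟨by linarith [hy.2], by linarith [hy.1, hz.2]⟩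
    have h2 : y ∈ Icc (0:ℝ) Z := ⟨hy.1, hy.2.trans hz.2⟩
    simp only [hhh' _ h1 _ hs, hhh' _ h2 _ hs]
  -- the hypotheses, rewritten for the extended functions
  have hFle : ∀ z ∈ Icc (0:ℝ) Z, ∀ t ∈ Icc (0:ℝ) T,
      F z t ≤ A₀ + ∫ s in (0:ℝ)..t, (c' * cF z s + A₀) := by
    intro z hz t ht
    rw [hFeq z hz t ht]
    refine (hf_le z hz t ht).trans (le_of_eq ?_)
    congr 1
    apply intervalIntegral.integral_congr
    intro s hs
    rw [uIcc_of_le ht.1] at hs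
    have hsT : s ∈ Icc (0:ℝ) T := ⟨hs.1, hs.2.trans ht.2⟩
    dsimp only
    rw [hcFeq z s, inner f F (fun z hz t ht => (hFeq z hz t ht).symm) z hz s hsT]
  have hGeq : ∀ z ∈ Icc (0:ℝ) Z, ∀ t ∈ Icc (0:ℝ) T,
      G z t = A₀ + ∫ s in (0:ℝ)..t, (c' * cG z s + G z s) := by
    intro z hz t ht
    rw [hGeqA z hz t ht, hA_eq z hz t ht]
    congr 1
    apply intervalIntegral.integral_congr
    intro s hs
    rw [uIcc_of_le ht.1] at hs
    have hsT : s ∈ Icc (0:ℝ) T := ⟨hs.1, hs.2.trans ht.2⟩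
    dsimp only
    rw [hcGeq z s, inner A G (fun z hz t ht => (hGeqA z hz t ht).symm) z hz s hsT,
      hGeqA z hz s hsT]
  -- main claim: F ≤ G on the rectangle
  have key : ∀ z ∈ Icc (0:ℝ) Z, ∀ t ∈ Icc (0:ℝ) T, F z t ≤ G z t := by
    have hGzc : ∀ z, Continuous fun s => G z s := fun z =>
      hGc.comp (continuous_const.prodMk continuous_id)
    have hFzc : ∀ z, Continuous fun s => F z s := fun z =>
      hFc.comp (continuous_const.prodMk continuous_id)
    by_contra hcon
    push_neg at hcon
    obtain ⟨z₀, hz₀, t₀', ht₀', hlt0⟩ := hcon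
    -- the set of bad times
    set S : Set ℝ := {t | t ∈ Icc (0:ℝ) T ∧ ∃ z ∈ Icc (0:ℝ) Z, G z t < F z t} with hSdef
    have hSne : S.Nonempty := ⟨t₀', ht₀', z₀, hz₀, hlt0⟩
    have hSbdd : BddBelow S := ⟨0, fun x hx => hx.1.1⟩
    set t₀ : ℝ := sInf S with ht₀def
    have ht₀mem : t₀ ∈ Icc (0:ℝ) T := by
      constructor
      · exact le_csInf hSne fun x hx => hx.1.1
      · exact (csInf_le hSbdd ⟨ht₀', z₀, hz₀, hlt0⟩).trans ht₀'.2
    -- before t₀, F ≤ G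
    have hbefore : ∀ s, 0 ≤ s → s < t₀ → ∀ z ∈ Icc (0:ℝ) Z, F z s ≤ G z s := by
      intro s hs0 hs z hz
      by_contra h
      push_neg at h
      have hsS : s ∈ S := ⟨⟨hs0, hs.le.trans ht₀mem.2⟩, z, hz, h⟩
      exact absurd (csInf_le hSbdd hsS) (not_le.mpr hs)
    -- at t₀, F ≤ G (by continuity, or directly if t₀ = 0)
    have hatt₀ : ∀ z ∈ Icc (0:ℝ) Z, F z t₀ ≤ G z t₀ := by
      intro z hz
      rcases eq_or_lt_of_le ht₀mem.1 with h0 | h0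
      · have h1 := hFle z hz 0 ⟨le_refl 0, hT.le⟩
        simp only [intervalIntegral.integral_same, add_zero] at h1
        rw [← h0]
        exact h1.trans (hGge z 0)
      · have hcont : Filter.Tendsto (fun s => F z s - G z s) (nhdsWithin t₀ (Iio t₀))
            (nhds (F z t₀ - G z t₀)) :=
          (((hFzc z).sub (hGzc z)).tendsto t₀).mono_left nhdsWithin_le_nhds
        have hle : F z t₀ - G z t₀ ≤ 0 := by
          refine le_of_tendsto hcont ?_
          filter_upwards [Ioo_mem_nhdsLT_of_mem (show t₀ ∈ Ioc (0:ℝ) t₀ from ⟨h0, le_refl _⟩)]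
            with s hs
          have := hbefore s hs.1.le hs.2 z hz
          linarith
        linarith
    have huptot₀ : ∀ s ∈ Icc (0:ℝ) t₀, ∀ z ∈ Icc (0:ℝ) Z, F z s ≤ G z s := by
      intro s hs z hz
      rcases lt_or_eq_of_le hs.2 with h | h
      · exact hbefore s hs.1 h z hz
      · rw [h]; exact hatt₀ z hz
    -- constants
    set C : ℝ := c' * (Z * (2 * K)) with hCdef
    have hC0 : 0 < C := by positivity
    set δ : ℝ := 1 / (2 * C) with hδdef
    have hδ0 : 0 < δ := by positivity
    -- a bad time within δ of t₀
    obtain ⟨t', ht'S, ht'lt⟩ : ∃ t' ∈ S, t' < t₀ + δ :=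
      exists_lt_of_csInf_lt hSne (by linarith)
    have ht₀t' : t₀ ≤ t' := csInf_le hSbdd ht'S
    obtain ⟨ht'T, z', hz', hbad⟩ := ht'S
    -- maximum over the strip
    have hstripc : IsCompact (Icc (0:ℝ) Z ×ˢ Icc t₀ t') := isCompact_Icc.prod isCompact_Icc
    have hstripne : (Icc (0:ℝ) Z ×ˢ Icc t₀ t').Nonempty :=
      ⟨(z', t'), hz', ⟨ht₀t', le_refl _⟩⟩
    obtain ⟨q, hq, hqmax⟩ := hstripc.exists_isMaxOn hstripne ((hFc.sub hGc).continuousOn)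
    set z₁ : ℝ := q.1 with hz₁def
    set t₁ : ℝ := q.2 with ht₁def
    set N : ℝ := F z₁ t₁ - G z₁ t₁ with hNdef
    have hz₁mem : z₁ ∈ Icc (0:ℝ) Z := hq.1
    have ht₁mem : t₁ ∈ Icc t₀ t' := hq.2
    have ht₁T : t₁ ∈ Icc (0:ℝ) T := ⟨ht₀mem.1.trans ht₁mem.1, ht₁mem.2.trans ht'T.2⟩
    have hN0 : 0 < N := by
      have h := hqmax (show ((z', t') : ℝ × ℝ) ∈ Icc (0:ℝ) Z ×ˢ Icc t₀ t' from
        ⟨hz', ⟨ht₀t', le_refl _⟩⟩)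
      simp only at h
      have : F z' t' - G z' t' ≤ N := h
      linarith
    have hstrip : ∀ y ∈ Icc (0:ℝ) Z, ∀ s ∈ Icc t₀ t₁, F y s - G y s ≤ N := by
      intro y hy s hs
      exact hqmax (show ((y, s) : ℝ × ℝ) ∈ Icc (0:ℝ) Z ×ˢ Icc t₀ t' from
        ⟨hy, ⟨hs.1, hs.2.trans ht₁mem.2⟩⟩)
    -- the integrand ψ
    set ψ : ℝ → ℝ := fun s => (c' * cF z₁ s + A₀) - (c' * cG z₁ s + G z₁ s) with hψdef
    have hψc : Continuous ψ :=
      ((continuous_const.mul (hcFc z₁)).add continuous_const).sub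
        ((continuous_const.mul (hcGc z₁)).add (hGzc z₁))
    have hψint : ∀ a b : ℝ, IntervalIntegrable ψ MeasureTheory.volume a b := fun a b =>
      hψc.intervalIntegrable a b
    -- main inequality: N ≤ ∫ ψ over [0, t₁]
    have hmain : N ≤ ∫ s in (0:ℝ)..t₁, ψ s := by
      have h1 := hFle z₁ hz₁mem t₁ ht₁T
      have h2 := hGeq z₁ hz₁mem t₁ ht₁T
      have h3 : (∫ s in (0:ℝ)..t₁, ψ s) =
          (∫ s in (0:ℝ)..t₁, (c' * cF z₁ s + A₀)) -
            ∫ s in (0:ℝ)..t₁, (c' * cG z₁ s + G z₁ s) := by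
        rw [← intervalIntegral.integral_sub (f := fun s => c' * cF z₁ s + A₀)
          (g := fun s => c' * cG z₁ s + G z₁ s)
          (((continuous_const.mul (hcFc z₁)).add continuous_const).intervalIntegrable 0 t₁)
          (((continuous_const.mul (hcGc z₁)).add (hGzc z₁)).intervalIntegrable 0 t₁)]
      rw [h3]
      simp only [hNdef]
      linarith
    -- first piece is nonpositive
    have hpiece1 : (∫ s in (0:ℝ)..t₀, ψ s) ≤ 0 := by
      have hmono : ∀ s ∈ Icc (0:ℝ) t₀, ψ s ≤ 0 := by
        intro s hs
        have hcFG : cF z₁ s ≤ cG z₁ s := by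
          rw [hcFeq, hcGeq]
          apply intervalIntegral.integral_mono_on hz₁mem.1 (hyintF z₁ s 0 z₁) (hyintG z₁ s 0 z₁)
          intro y hy
          have h1' : z₁ - y ∈ Icc (0:ℝ) Z := ⟨by linarith [hy.2], by linarith [hy.1, hz₁mem.2]⟩
          have h2 : y ∈ Icc (0:ℝ) Z := ⟨hy.1, hy.2.trans hz₁mem.2⟩
          have e1 := huptot₀ s hs _ h1'
          have e2 := huptot₀ s hs _ h2
          exact mul_le_mul e1 e2 (hFnn _ _) (hA₀.le.trans (hGge _ _))
        have := hGge z₁ s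
        simp only [hψdef]
        nlinarith [hc'.le]
      calc (∫ s in (0:ℝ)..t₀, ψ s) ≤ ∫ s in (0:ℝ)..t₀, (0:ℝ) := by
            apply intervalIntegral.integral_mono_on ht₀mem.1 (hψint 0 t₀)
              (intervalIntegrable_const) hmono
        _ = 0 := by simp
    -- second piece bounded by C * N * (t₁ - t₀)
    have hpiece2 : (∫ s in t₀..t₁, ψ s) ≤ (t₁ - t₀) * (C * N) := by
      have hmono : ∀ s ∈ Icc t₀ t₁, ψ s ≤ C * N := by
        intro s hs
        have hdiff : cF z₁ s - cG z₁ s ≤ Z * (2 * K * N) := by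
          rw [hcFeq, hcGeq,
            ← intervalIntegral.integral_sub (hyintF z₁ s 0 z₁) (hyintG z₁ s 0 z₁)]
          have hb : (∫ y in (0:ℝ)..z₁, (F (z₁ - y) s * F y s - G (z₁ - y) s * G y s)) ≤
              ∫ y in (0:ℝ)..z₁, (2 * K * N) := by
            apply intervalIntegral.integral_mono_on hz₁mem.1
              ((hyintF z₁ s 0 z₁).sub (hyintG z₁ s 0 z₁)) intervalIntegrable_const
            intro y hy
            have h1 : z₁ - y ∈ Icc (0:ℝ) Z := ⟨by linarith [hy.2], by linarith [hy.1, hz₁mem.2]⟩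
            have h2 : y ∈ Icc (0:ℝ) Z := ⟨hy.1, hy.2.trans hz₁mem.2⟩
            have e1 : F (z₁ - y) s - G (z₁ - y) s ≤ N := hstrip _ h1 s hs
            have e2 : F y s - G y s ≤ N := hstrip _ h2 s hs
            have b1 : F (z₁ - y) s * (F y s - G y s) ≤ K * N :=
              le_trans (mul_le_mul_of_nonneg_left e2 (hFnn _ _))
                (mul_le_mul_of_nonneg_right (hFK _ _) hN0.le)
            have b2 : G y s * (F (z₁ - y) s - G (z₁ - y) s) ≤ K * N :=
              le_trans (mul_le_mul_of_nonneg_left e1 (hA₀.le.trans (hGge _ _)))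
                (mul_le_mul_of_nonneg_right (hGK _ _) hN0.le)
            have hid : F (z₁ - y) s * F y s - G (z₁ - y) s * G y s =
                F (z₁ - y) s * (F y s - G y s) + G y s * (F (z₁ - y) s - G (z₁ - y) s) := by
              ring
            linarith
          rw [intervalIntegral.integral_const, smul_eq_mul, sub_zero] at hb
          refine hb.trans ?_
          have : (0:ℝ) ≤ 2 * K * N := by positivity
          exact mul_le_mul_of_nonneg_right hz₁mem.2 this
        have hGA := hGge z₁ s
        have hψle : ψ s ≤ c' * (cF z₁ s - cG z₁ s) := by simp only [hψdef]; nlinarith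
        refine hψle.trans ?_
        calc c' * (cF z₁ s - cG z₁ s) ≤ c' * (Z * (2 * K * N)) :=
              mul_le_mul_of_nonneg_left hdiff hc'.le
          _ = C * N := by simp only [hCdef]; ring
      calc (∫ s in t₀..t₁, ψ s) ≤ ∫ s in t₀..t₁, (C * N) :=
            intervalIntegral.integral_mono_on ht₁mem.1 (hψint t₀ t₁)
              intervalIntegrable_const hmono
        _ = (t₁ - t₀) * (C * N) := by rw [intervalIntegral.integral_const, smul_eq_mul]
    -- combine
    have hsplit : (∫ s in (0:ℝ)..t₀, ψ s) + (∫ s in t₀..t₁, ψ s) = ∫ s in (0:ℝ)..t₁, ψ s :=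
      intervalIntegral.integral_add_adjacent_intervals (hψint 0 t₀) (hψint t₀ t₁)
    have ht₁δ : t₁ - t₀ ≤ δ := by
      have := ht₁mem.2
      linarith
    have hCN : 0 ≤ C * N := by positivity
    have hfinal : (t₁ - t₀) * (C * N) ≤ δ * (C * N) := mul_le_mul_of_nonneg_right ht₁δ hCN
    have hδC : δ * (C * N) = N / 2 := by
      simp only [hδdef]
      field_simp
    nlinarith [hmain, hpiece1, hpiece2, hsplit, hfinal, hδC, hN0]
  intro z hz t ht
  rw [← hFeq z hz t ht, ← hGeqA z hz t ht]
  exact key z hz t ht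
end
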